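/- arXiv:2106.05203 — 4 statements merged into one kernel-verified Lean document; each statement's English description precedes it below -/
import Mathlib

section
/- Let {v^t} be a sequence of vectors in R^d, and let M be the (deterministic) Markov compressor built from a deterministic biased compressor C ∈ B(α): M(v^0) = C(v^0) and M(v^{t+1}) = M(v^t) + C(v^{t+1} - M(v^t)). Define the distortion D^t = ||M(v^t) - v^t||² and increments Δ^t = ||v^{t+1} - v^t||². Then for constants θ = 1-(1-α)(1+s) and β = (1-α)(1+1/s) with s chosen so that θ > 0, one has D^t ≤ (1-θ)^t D^0 + β Σ_{i=0}^{t-1} (1-θ)^i Δ^{t-1-i} for all t ≥ 1. -/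
/-- Distortion bound for the (deterministic) Markov compressor `M` built from a
deterministic contractive compressor `C ∈ B(α)`. -/
theorem markov_distortion {d : ℕ}
    (C : EuclideanSpace ℝ (Fin d) → EuclideanSpace ℝ (Fin d)) (α : ℝ)
    (hα0 : 0 < α) (hα1 : α ≤ 1)
    (hC : ∀ x, ‖C x - x‖ ^ 2 ≤ (1 - α) * ‖x‖ ^ 2)
    (v m : ℕ → EuclideanSpace ℝ (Fin d))
    (hm0 : m 0 = C (v 0))
    (hm : ∀ t, m (t + 1) = m t + C (v (t + 1) - m t))
    (s : ℝ) (hs : 0 < s) (hcontr : (1 - α) * (1 + s) < 1)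
    (θ β : ℝ) (hθ : θ = 1 - (1 - α) * (1 + s)) (hβ : β = (1 - α) * (1 + 1 / s))
    (D Δ : ℕ → ℝ)
    (hD : ∀ t, D t = ‖m t - v t‖ ^ 2)
    (hΔ : ∀ t, Δ t = ‖v (t + 1) - v t‖ ^ 2) :
    ∀ t, 1 ≤ t →
      D t ≤ (1 - θ) ^ t * D 0 + β * ∑ i ∈ Finset.range t, (1 - θ) ^ i * Δ (t - 1 - i) := by
  have hα : 0 ≤ 1 - α := by linarith
  have h1θ : 1 - θ = (1 - α) * (1 + s) := by rw [hθ]; ring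
  have h1θ0 : 0 ≤ 1 - θ := by rw [h1θ]; positivity
  have hβ0 : 0 ≤ β := by rw [hβ]; positivity
  -- one-step recursion
  have step : ∀ t, D (t + 1) ≤ (1 - θ) * D t + β * Δ t := by
    intro t
    have key := hC (v (t + 1) - m t)
    have heq : m (t + 1) - v (t + 1) = C (v (t + 1) - m t) - (v (t + 1) - m t) := by
      rw [hm t]; abel
    have h1 : D (t + 1) ≤ (1 - α) * ‖v (t + 1) - m t‖ ^ 2 := by
      rw [hD, heq]; exact key
    have h2 : ‖v (t + 1) - m t‖ ≤ ‖v (t + 1) - v t‖ + ‖m t - v t‖ := by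
      have h' := norm_add_le (v (t + 1) - v t) (v t - m t)
      rw [norm_sub_rev (v t) (m t)] at h'
      calc ‖v (t + 1) - m t‖ = ‖(v (t + 1) - v t) + (v t - m t)‖ := by congr 1; abel
        _ ≤ ‖v (t + 1) - v t‖ + ‖m t - v t‖ := h'
    -- Young: (a+b)^2 ≤ (1+1/s) a^2 + (1+s) b^2
    have h3 : ‖v (t + 1) - m t‖ ^ 2 ≤
        (1 + 1 / s) * ‖v (t + 1) - v t‖ ^ 2 + (1 + s) * ‖m t - v t‖ ^ 2 := by
      have ha : (0:ℝ) ≤ ‖v (t + 1) - v t‖ := norm_nonneg _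
      have hb : (0:ℝ) ≤ ‖m t - v t‖ := norm_nonneg _
      have hc : (0:ℝ) ≤ ‖v (t + 1) - m t‖ := norm_nonneg _
      have hy : 0 ≤ (s * ‖m t - v t‖ - ‖v (t + 1) - v t‖) ^ 2 := sq_nonneg _
      have hsq : ‖v (t + 1) - m t‖ ^ 2 ≤ (‖v (t + 1) - v t‖ + ‖m t - v t‖) ^ 2 := by
        nlinarith
      have hinv : (1 / s) * s = 1 := one_div_mul_cancel (ne_of_gt hs)
      have h2xy : 2 * ‖v (t + 1) - v t‖ * ‖m t - v t‖ ≤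
          (1 / s) * ‖v (t + 1) - v t‖ ^ 2 + s * ‖m t - v t‖ ^ 2 := by
        nlinarith [hy, hs, hinv, mul_pos hs hs]
      nlinarith
    calc D (t + 1) ≤ (1 - α) * ‖v (t + 1) - m t‖ ^ 2 := h1
      _ ≤ (1 - α) * ((1 + 1 / s) * ‖v (t + 1) - v t‖ ^ 2 + (1 + s) * ‖m t - v t‖ ^ 2) := by
          exact mul_le_mul_of_nonneg_left h3 hα
      _ = (1 - θ) * D t + β * Δ t := by rw [hD, hΔ, h1θ, hβ]; ring
  -- induction
  intro t ht
  induction t with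
  | zero => omega
  | succ n ih =>
    rcases Nat.eq_zero_or_pos n with hn | hn
    · subst hn
      simpa using step 0
    · have hrec := ih hn
      have hstep := step n
      have hsum : ∑ i ∈ Finset.range (n + 1), (1 - θ) ^ i * Δ (n + 1 - 1 - i)
          = (∑ i ∈ Finset.range n, (1 - θ) ^ (i + 1) * Δ (n - 1 - i)) + Δ n := by
        rw [Finset.sum_range_succ']
        congr 1
        · apply Finset.sum_congr rfl
          intro i hi
          congr 2
          omega
        · simp
      calc D (n + 1) ≤ (1 - θ) * D n + β * Δ n := hstep
        _ ≤ (1 - θ) * ((1 - θ) ^ n * D 0 +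
              β * ∑ i ∈ Finset.range n, (1 - θ) ^ i * Δ (n - 1 - i)) + β * Δ n := by
            nlinarith [mul_le_mul_of_nonneg_left hrec h1θ0]
        _ = (1 - θ) ^ (n + 1) * D 0 +
              β * ∑ i ∈ Finset.range (n + 1), (1 - θ) ^ i * Δ (n + 1 - 1 - i) := by
            rw [hsum, mul_add, mul_add, Finset.mul_sum, Finset.mul_sum]
            have hterm : ∑ i ∈ Finset.range n, (1 - θ) * (β * ((1 - θ) ^ i * Δ (n - 1 - i)))
                = ∑ i ∈ Finset.range n, β * ((1 - θ) ^ (i + 1) * Δ (n - 1 - i)) :=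
              Finset.sum_congr rfl (fun i _ => by ring)
            rw [hterm, pow_succ, Finset.mul_sum]
            ring
end

section
/- (Deterministic EF21 convergence, nonconvex case.) Let f = (1/n) Σ_i f_i, where each f_i has L_i-Lipschitz gradient, f has L-Lipschitz gradient, and f is bounded below by f^inf. Let C be a deterministic biased compressor with parameter α ∈ (0,1), set θ = 1 - √(1-α), β = (1-α)/(1-√(1-α)), L̃ = ((1/n)Σ L_i²)^{1/2}. Run EF21: x^{t+1} = x^t - γ g^t with g^t = (1/n)Σ g_i^t and g_i^{t+1} = g_i^t + C(∇f_i(x^{t+1}) - g_i^t), with stepsize 0 < γ ≤ (L + L̃√(β/θ))^{-1}. Then for every T ≥ 1, (1/T) Σ_{t=0}^{T-1} ||∇f(x^t)||² ≤ 2(f(x^0) - f^inf)/(γT) + G^0/(θT), where G^t = (1/n)Σ_i ||g_i^t - ∇f_i(x^t)||². -/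
open Finset in
private lemma EF21_avg_norm_sq_le {d n : ℕ} (hn : 0 < n) (a : Fin n → EuclideanSpace ℝ (Fin d)) :
    ‖(1 / (n : ℝ)) • ∑ i, a i‖ ^ 2 ≤ (1 / (n : ℝ)) * ∑ i, ‖a i‖ ^ 2 := by
  have hn' : (0:ℝ) < n := by exact_mod_cast hn
  have h1 : ‖(1 / (n : ℝ)) • ∑ i, a i‖ = (1 / (n:ℝ)) * ‖∑ i, a i‖ := by
    rw [norm_smul, Real.norm_eq_abs, abs_of_pos (by positivity)]
  have h2 : ‖∑ i, a i‖ ≤ ∑ i, ‖a i‖ := norm_sum_le _ _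
  have h3 : (∑ i, ‖a i‖) ^ 2 ≤ (n:ℝ) * ∑ i, ‖a i‖ ^ 2 := by
    have := sq_sum_le_card_mul_sum_sq (s := (Finset.univ : Finset (Fin n))) (f := fun i => ‖a i‖)
    simpa using this
  have h4 : ‖∑ i, a i‖ ^ 2 ≤ (n:ℝ) * ∑ i, ‖a i‖ ^ 2 :=
    le_trans (pow_le_pow_left₀ (norm_nonneg _) h2 2) h3
  rw [h1, mul_pow]
  calc (1/(n:ℝ))^2 * ‖∑ i, a i‖^2 ≤ (1/(n:ℝ))^2 * ((n:ℝ) * ∑ i, ‖a i‖^2) := by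
        exact mul_le_mul_of_nonneg_left h4 (by positivity)
    _ = (1/(n:ℝ)) * ∑ i, ‖a i‖^2 := by field_simp

private lemma EF21_young (A B s : ℝ) (hs : 0 < s) :
    (A + B) ^ 2 ≤ (1 + s) * A ^ 2 + (1 + 1 / s) * B ^ 2 := by
  have h := sq_nonneg (s * A - B)
  have h2 : 0 ≤ (s * A - B)^2 / s := div_nonneg h hs.le
  have h3 : (A+B)^2 + (s*A - B)^2 / s = (1+s)*A^2 + (1+1/s)*B^2 := by field_simp; ring
  linarith

private lemma EF21_descent {d : ℕ} (F : EuclideanSpace ℝ (Fin d) → ℝ) (Lf : ℝ)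
    (hFdiff : Differentiable ℝ F)
    (hFlip : ∀ x y, ‖gradient F x - gradient F y‖ ≤ Lf * ‖x - y‖)
    (y z : EuclideanSpace ℝ (Fin d)) :
    F z ≤ F y + @inner ℝ _ _ (gradient F y) (z - y) + Lf / 2 * ‖z - y‖ ^ 2 := by
  set v := z - y with hv
  have hlipg : LipschitzWith (Real.toNNReal Lf) (gradient F) := by
    apply LipschitzWith.of_dist_le_mul
    intro a b
    rw [dist_eq_norm, dist_eq_norm]
    exact le_trans (hFlip a b)
      (mul_le_mul_of_nonneg_right (Real.le_coe_toNNReal Lf) (norm_nonneg _))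
  have hline : Continuous fun t : ℝ => y + t • v := by continuity
  have hψc : Continuous fun t : ℝ => @inner ℝ _ _ (gradient F (y + t • v)) v :=
    (hlipg.continuous.comp hline).inner continuous_const
  have hφ : ∀ t : ℝ, HasDerivAt (fun t : ℝ => F (y + t • v))
      (@inner ℝ _ _ (gradient F (y + t • v)) v) t := by
    intro t
    have hg : HasGradientAt F (gradient F (y + t • v)) (y + t • v) :=
      (hFdiff (y + t • v)).hasGradientAt
    have hF' : HasFDerivAt F ((InnerProductSpace.toDual ℝ _) (gradient F (y + t • v))) (y + t • v) :=
      hasGradientAt_iff_hasFDerivAt.mp hg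
    have hl : HasDerivAt (fun t : ℝ => y + t • v) v t := by
      simpa using ((hasDerivAt_id t).smul_const v).const_add y
    have h := hF'.comp_hasDerivAt t hl
    simp only [InnerProductSpace.toDual_apply_apply] at h
    exact h
  have hFTC : (∫ t in (0:ℝ)..1, @inner ℝ _ _ (gradient F (y + t • v)) v)
      = F (y + (1:ℝ) • v) - F (y + (0:ℝ) • v) :=
    intervalIntegral.integral_eq_sub_of_hasDerivAt (fun t _ => hφ t)
      (hψc.intervalIntegrable 0 1)
  have hbound : ∀ t ∈ Set.Icc (0:ℝ) 1,
      @inner ℝ _ _ (gradient F (y + t • v)) v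
        ≤ @inner ℝ _ _ (gradient F y) v + Lf * ‖v‖ ^ 2 * t := by
    intro t ht
    have h1 : @inner ℝ _ _ (gradient F (y + t • v)) v - @inner ℝ _ _ (gradient F y) v
        = @inner ℝ _ _ (gradient F (y + t • v) - gradient F y) v := by
      rw [inner_sub_left]
    have h2 : @inner ℝ _ _ (gradient F (y + t • v) - gradient F y) v
        ≤ ‖gradient F (y + t • v) - gradient F y‖ * ‖v‖ := real_inner_le_norm _ _
    have h3 : ‖gradient F (y + t • v) - gradient F y‖ ≤ Lf * (t * ‖v‖) := by
      have h := hFlip (y + t • v) y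
      simpa [add_sub_cancel_left, norm_smul, abs_of_nonneg ht.1] using h
    have h4 := mul_le_mul_of_nonneg_right h3 (norm_nonneg v)
    nlinarith [norm_nonneg v]
  have hc2 : Continuous fun t : ℝ => Lf * ‖v‖ ^ 2 * t := continuous_const.mul continuous_id
  have hc3 : Continuous fun t : ℝ => @inner ℝ _ _ (gradient F y) v + Lf * ‖v‖ ^ 2 * t :=
    continuous_const.add hc2
  have hint2 : (∫ t in (0:ℝ)..1, (@inner ℝ _ _ (gradient F y) v + Lf * ‖v‖ ^ 2 * t))
      = @inner ℝ _ _ (gradient F y) v + Lf * ‖v‖ ^ 2 / 2 := by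
    rw [intervalIntegral.integral_add intervalIntegrable_const
      (hc2.intervalIntegrable 0 1)]
    rw [intervalIntegral.integral_const, intervalIntegral.integral_const_mul, integral_id,
      sub_zero, one_smul]
    ring
  have hmono := intervalIntegral.integral_mono_on (μ := MeasureTheory.volume) (by norm_num : (0:ℝ) ≤ 1)
    (hψc.intervalIntegrable 0 1)
    (hc3.intervalIntegrable 0 1)
    hbound
  rw [hFTC, hint2] at hmono
  have e1 : y + (1:ℝ) • v = z := by rw [one_smul, hv]; abel
  have e0 : y + (0:ℝ) • v = y := by rw [zero_smul, add_zero]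
  rw [e1, e0] at hmono
  linarith

set_option maxHeartbeats 1000000 in
/-- Deterministic EF21 convergence, nonconvex case. -/
theorem EF21_nonconvex {d n : ℕ} (hn : 0 < n)
    (f : Fin n → EuclideanSpace ℝ (Fin d) → ℝ) (L : Fin n → ℝ) (Lf : ℝ)
    (hdiff : ∀ i, Differentiable ℝ (f i))
    (hlip : ∀ i x y, ‖gradient (f i) x - gradient (f i) y‖ ≤ L i * ‖x - y‖)
    (F : EuclideanSpace ℝ (Fin d) → ℝ)
    (hF : ∀ x, F x = (1 / (n : ℝ)) * ∑ i, f i x)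
    (hFdiff : Differentiable ℝ F)
    (hFlip : ∀ x y, ‖gradient F x - gradient F y‖ ≤ Lf * ‖x - y‖)
    (finf : ℝ) (hbelow : ∀ x, finf ≤ F x)
    (C : EuclideanSpace ℝ (Fin d) → EuclideanSpace ℝ (Fin d)) (α : ℝ)
    (hα0 : 0 < α) (hα1 : α < 1)
    (hC : ∀ x, ‖C x - x‖ ^ 2 ≤ (1 - α) * ‖x‖ ^ 2)
    (θ β Lt : ℝ)
    (hθ : θ = 1 - Real.sqrt (1 - α))
    (hβ : β = (1 - α) / (1 - Real.sqrt (1 - α)))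
    (hLt : Lt = Real.sqrt ((1 / (n : ℝ)) * ∑ i, (L i) ^ 2))
    (γ : ℝ) (hγ0 : 0 < γ) (hγ : γ ≤ (Lf + Lt * Real.sqrt (β / θ))⁻¹)
    (x : ℕ → EuclideanSpace ℝ (Fin d)) (g : Fin n → ℕ → EuclideanSpace ℝ (Fin d))
    (hx : ∀ t, x (t + 1) = x t - γ • ((1 / (n : ℝ)) • ∑ i, g i t))
    (hg : ∀ i t, g i (t + 1) = g i t + C (gradient (f i) (x (t + 1)) - g i t)) :
    ∀ T : ℕ, 1 ≤ T →
      (1 / (T : ℝ)) * ∑ t ∈ Finset.range T, ‖gradient F (x t)‖ ^ 2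
        ≤ 2 * (F (x 0) - finf) / (γ * T)
          + ((1 / (n : ℝ)) * ∑ i, ‖g i 0 - gradient (f i) (x 0)‖ ^ 2) / (θ * T) := by
  intro T hT
  have hn' : (0:ℝ) < n := by exact_mod_cast hn
  have hT' : (0:ℝ) < T := by exact_mod_cast hT
  rcases Nat.eq_zero_or_pos d with hd | hd
  · -- trivial case `d = 0`
    subst hd
    have hz : ∀ w : EuclideanSpace ℝ (Fin 0), w = 0 := fun w => by ext i; exact i.elim0
    have hL : (∑ t ∈ Finset.range T, ‖gradient F (x t)‖ ^ 2) = 0 := by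
      apply Finset.sum_eq_zero
      intro t _
      rw [hz (gradient F (x t))]
      simp
    have hG : (∑ i, ‖g i 0 - gradient (f i) (x 0)‖ ^ 2) = 0 := by
      apply Finset.sum_eq_zero
      intro i _
      rw [hz (g i 0 - gradient (f i) (x 0))]
      simp
    rw [hL, hG, mul_zero, mul_zero, zero_div]
    have h1 : 0 ≤ 2 * (F (x 0) - finf) / (γ * T) := by
      apply div_nonneg _ (by positivity)
      linarith [hbelow (x 0)]
    linarith
  · -- main case `0 < d`
    -- basic constants
    have hr0 : (0:ℝ) < 1 - α := by linarith
    have hrpos : 0 < Real.sqrt (1 - α) := Real.sqrt_pos.mpr hr0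
    have hr2 : Real.sqrt (1 - α) ^ 2 = 1 - α := Real.sq_sqrt hr0.le
    have hrlt : Real.sqrt (1 - α) < 1 := by nlinarith
    have hθpos : 0 < θ := by rw [hθ]; linarith
    have hβpos : 0 < β := by rw [hβ]; exact div_pos hr0 (by linarith)
    have hLtnn : 0 ≤ Lt := by rw [hLt]; exact Real.sqrt_nonneg _
    have hLt2 : Lt ^ 2 = (1 / (n : ℝ)) * ∑ i, (L i) ^ 2 := by
      rw [hLt]
      exact Real.sq_sqrt (by positivity)
    -- Lf is nonnegative
    have hLf0 : 0 ≤ Lf := by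
      have h := hFlip 0 (EuclideanSpace.single ⟨0, hd⟩ (1:ℝ))
      have hnorm : ‖(0 : EuclideanSpace ℝ (Fin d)) - EuclideanSpace.single ⟨0, hd⟩ (1:ℝ)‖ = 1 := by
        rw [zero_sub, norm_neg, EuclideanSpace.norm_single]
        norm_num
      rw [hnorm, mul_one] at h
      exact le_trans (norm_nonneg _) h
    -- gradient of the average
    have hgradF : ∀ y, gradient F y = (1/(n:ℝ)) • ∑ i, gradient (f i) y := by
      intro y
      have hFs : HasFDerivAt (fun z => (1/(n:ℝ)) * ∑ i, f i z)
          ((1/(n:ℝ)) • ∑ i, (InnerProductSpace.toDual ℝ _) (gradient (f i) y)) y := by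
        apply HasFDerivAt.const_mul
        apply HasFDerivAt.fun_sum
        intro i _
        exact hasGradientAt_iff_hasFDerivAt.mp ((hdiff i) y).hasGradientAt
      have hFeq : F = fun z => (1/(n:ℝ)) * ∑ i, f i z := funext hF
      have hFg : HasGradientAt F ((1/(n:ℝ)) • ∑ i, gradient (f i) y) y := by
        rw [hasGradientAt_iff_hasFDerivAt, hFeq, map_smul, map_sum]
        exact hFs
      exact hFg.gradient
    -- abbreviations (as plain functions)
    have hΔx : ∀ t, x (t+1) - x t = -(γ • ((1/(n:ℝ)) • ∑ i, g i t)) := by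
      intro t
      rw [hx t]
      abel
    have hΔnorm : ∀ t, ‖x (t+1) - x t‖ ^ 2 = γ^2 * ‖(1/(n:ℝ)) • ∑ i, g i t‖^2 := by
      intro t
      rw [hΔx t, norm_neg, norm_smul, mul_pow, Real.norm_eq_abs, sq_abs]
    -- error of averaged estimator
    have herr : ∀ t, ‖((1/(n:ℝ)) • ∑ i, g i t) - gradient F (x t)‖^2
        ≤ (1/(n:ℝ)) * ∑ i, ‖g i t - gradient (f i) (x t)‖^2 := by
      intro t
      have h1 : ((1/(n:ℝ)) • ∑ i, g i t) - gradient F (x t)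
          = (1/(n:ℝ)) • ∑ i, (g i t - gradient (f i) (x t)) := by
        rw [hgradF, Finset.sum_sub_distrib, smul_sub]
      rw [h1]
      exact EF21_avg_norm_sq_le hn _
    -- contraction of the compression error
    have hGstep : ∀ t, (1/(n:ℝ)) * ∑ i, ‖g i (t+1) - gradient (f i) (x (t+1))‖^2
        ≤ (1 - θ) * ((1/(n:ℝ)) * ∑ i, ‖g i t - gradient (f i) (x t)‖^2)
          + β * Lt^2 * γ^2 * ‖(1/(n:ℝ)) • ∑ i, g i t‖^2 := by
      intro t
      set s : ℝ := (1 - Real.sqrt (1 - α)) / Real.sqrt (1 - α) with hs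
      have hspos : 0 < s := div_pos (by linarith) hrpos
      have hne1 : Real.sqrt (1 - α) ≠ 0 := ne_of_gt hrpos
      have hne2 : 1 - Real.sqrt (1 - α) ≠ 0 := by
        have : 0 < 1 - Real.sqrt (1 - α) := by linarith
        exact ne_of_gt this
      have hs1 : 1 + s = 1 / Real.sqrt (1 - α) := by
        rw [hs]
        field_simp
        ring
      have hs2 : 1 + 1/s = 1 / (1 - Real.sqrt (1 - α)) := by
        rw [hs, one_div_div]
        field_simp
        ring
      have hc1 : (1-α) * (1+s) = 1 - θ := by
        rw [hs1, hθ, mul_one_div, div_eq_iff hne1]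
        linear_combination -hr2
      have hc2 : (1-α) * (1+1/s) = β := by
        rw [hs2, hβ, mul_one_div]
      have key : ∀ i : Fin n, ‖g i (t+1) - gradient (f i) (x (t+1))‖^2
          ≤ (1 - θ) * ‖g i t - gradient (f i) (x t)‖^2
            + β * ((L i)^2 * ‖x (t+1) - x t‖^2) := by
        intro i
        set u := gradient (f i) (x (t+1)) - g i t with hu
        have h0 : g i (t+1) - gradient (f i) (x (t+1)) = C u - u := by
          rw [hg i t, hu]
          abel
        have h1 : ‖g i (t+1) - gradient (f i) (x (t+1))‖^2 ≤ (1-α) * ‖u‖^2 := by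
          rw [h0]
          exact hC u
        have hA : ‖u‖ ≤ ‖g i t - gradient (f i) (x t)‖
            + ‖gradient (f i) (x (t+1)) - gradient (f i) (x t)‖ := by
          have he : u = (gradient (f i) (x t) - g i t)
              + (gradient (f i) (x (t+1)) - gradient (f i) (x t)) := by
            rw [hu]; abel
          calc ‖u‖ ≤ ‖gradient (f i) (x t) - g i t‖
                + ‖gradient (f i) (x (t+1)) - gradient (f i) (x t)‖ := by
                rw [he]; exact norm_add_le _ _
            _ = ‖g i t - gradient (f i) (x t)‖
                + ‖gradient (f i) (x (t+1)) - gradient (f i) (x t)‖ := by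
                rw [norm_sub_rev]
        have h2 : ‖u‖^2 ≤ (1+s) * ‖g i t - gradient (f i) (x t)‖^2
            + (1+1/s) * ‖gradient (f i) (x (t+1)) - gradient (f i) (x t)‖^2 :=
          le_trans (pow_le_pow_left₀ (norm_nonneg _) hA 2) (EF21_young _ _ s hspos)
        have h3 : ‖gradient (f i) (x (t+1)) - gradient (f i) (x t)‖^2
            ≤ (L i)^2 * ‖x (t+1) - x t‖^2 := by
          have h := pow_le_pow_left₀ (norm_nonneg _) (hlip i (x (t+1)) (x t)) 2
          rwa [mul_pow] at h
        calc ‖g i (t+1) - gradient (f i) (x (t+1))‖^2 ≤ (1-α) * ‖u‖^2 := h1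
          _ ≤ (1-α) * ((1+s) * ‖g i t - gradient (f i) (x t)‖^2
              + (1+1/s) * ‖gradient (f i) (x (t+1)) - gradient (f i) (x t)‖^2) :=
            mul_le_mul_of_nonneg_left h2 (by linarith)
          _ = (1 - θ) * ‖g i t - gradient (f i) (x t)‖^2
              + β * ‖gradient (f i) (x (t+1)) - gradient (f i) (x t)‖^2 := by
            rw [mul_add, ← mul_assoc, ← mul_assoc, hc1, hc2]
          _ ≤ (1 - θ) * ‖g i t - gradient (f i) (x t)‖^2 + β * ((L i)^2 * ‖x (t+1) - x t‖^2) := by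
            have := mul_le_mul_of_nonneg_left h3 hβpos.le
            linarith
      have hsum := Finset.sum_le_sum (fun i (_ : i ∈ Finset.univ) => key i)
      have hmul := mul_le_mul_of_nonneg_left hsum (by positivity : (0:ℝ) ≤ 1/(n:ℝ))
      have e1 : (1/(n:ℝ)) * ∑ i, ((1 - θ) * ‖g i t - gradient (f i) (x t)‖^2
            + β * ((L i)^2 * ‖x (t+1) - x t‖^2))
          = (1 - θ) * ((1/(n:ℝ)) * ∑ i, ‖g i t - gradient (f i) (x t)‖^2)
            + β * ((1/(n:ℝ)) * ∑ i, (L i)^2) * ‖x (t+1) - x t‖^2 := by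
        rw [Finset.sum_add_distrib, ← Finset.mul_sum, ← Finset.mul_sum, ← Finset.sum_mul]
        ring
      rw [e1] at hmul
      calc (1/(n:ℝ)) * ∑ i, ‖g i (t+1) - gradient (f i) (x (t+1))‖^2
          ≤ (1 - θ) * ((1/(n:ℝ)) * ∑ i, ‖g i t - gradient (f i) (x t)‖^2)
            + β * ((1/(n:ℝ)) * ∑ i, (L i)^2) * ‖x (t+1) - x t‖^2 := hmul
        _ = (1 - θ) * ((1/(n:ℝ)) * ∑ i, ‖g i t - gradient (f i) (x t)‖^2)
            + β * Lt^2 * γ^2 * ‖(1/(n:ℝ)) • ∑ i, g i t‖^2 := by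
          rw [← hLt2, hΔnorm t]
          ring
    -- descent inequality
    have hdescent : ∀ t, F (x (t+1)) ≤ F (x t) - γ/2 * ‖gradient F (x t)‖^2
        - (γ/2 - Lf*γ^2/2) * ‖(1/(n:ℝ)) • ∑ i, g i t‖^2
        + γ/2 * ((1/(n:ℝ)) * ∑ i, ‖g i t - gradient (f i) (x t)‖^2) := by
      intro t
      have h1 := EF21_descent F Lf hFdiff hFlip (x t) (x (t+1))
      rw [hΔx t] at h1
      rw [inner_neg_right, real_inner_smul_right] at h1
      have h4 : ‖-(γ • ((1/(n:ℝ)) • ∑ i, g i t))‖^2 = γ^2 * ‖(1/(n:ℝ)) • ∑ i, g i t‖^2 := by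
        rw [norm_neg, norm_smul, mul_pow, Real.norm_eq_abs, sq_abs]
      rw [h4] at h1
      rw [real_inner_comm] at h1
      have h3 : ‖((1/(n:ℝ)) • ∑ i, g i t) - gradient F (x t)‖^2
          = ‖(1/(n:ℝ)) • ∑ i, g i t‖^2
            - 2 * @inner ℝ _ _ ((1/(n:ℝ)) • ∑ i, g i t) (gradient F (x t))
            + ‖gradient F (x t)‖^2 := norm_sub_sq_real _ _
      have h5 := herr t
      have h6 : γ/2 * ‖((1/(n:ℝ)) • ∑ i, g i t) - gradient F (x t)‖^2
          ≤ γ/2 * ((1/(n:ℝ)) * ∑ i, ‖g i t - gradient (f i) (x t)‖^2) :=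
        mul_le_mul_of_nonneg_left h5 (by positivity)
      nlinarith [h1, h3, h6]
    -- the stepsize condition
    have hbrk : γ * Lf + γ^2 * (β/θ) * Lt^2 ≤ 1 := by
      set b := Lt * Real.sqrt (β/θ) with hb
      have hbnn : 0 ≤ b := mul_nonneg hLtnn (Real.sqrt_nonneg _)
      have hb2 : b^2 = Lt^2 * (β/θ) := by
        rw [hb, mul_pow, Real.sq_sqrt (by positivity)]
      have habpos : 0 < Lf + b := by
        by_contra hcon
        push_neg at hcon
        have : (Lf + b)⁻¹ ≤ 0 := inv_nonpos.mpr hcon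
        linarith [le_trans hγ this]
      have h1 : γ * (Lf + b) ≤ 1 := by
        calc γ * (Lf + b) ≤ (Lf + b)⁻¹ * (Lf + b) :=
              mul_le_mul_of_nonneg_right hγ habpos.le
          _ = 1 := inv_mul_cancel₀ habpos.ne'
      have h2 : (γ*b)^2 ≤ γ*b := by
        nlinarith [mul_nonneg hγ0.le hbnn, mul_nonneg hγ0.le hLf0]
      have e : γ^2*(β/θ)*Lt^2 = (γ*b)^2 := by
        rw [mul_pow, hb2]
        ring
      rw [e]
      nlinarith [mul_nonneg hγ0.le hLf0]
    -- per-step Lyapunov inequality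
    have hPstep : ∀ t, γ/2 * ‖gradient F (x t)‖^2
        + (F (x (t+1)) - finf + γ/(2*θ) * ((1/(n:ℝ)) * ∑ i, ‖g i (t+1) - gradient (f i) (x (t+1))‖^2))
        ≤ F (x t) - finf + γ/(2*θ) * ((1/(n:ℝ)) * ∑ i, ‖g i t - gradient (f i) (x t)‖^2) := by
      intro t
      have h1 := hdescent t
      have h2 := hGstep t
      have h3 := mul_le_mul_of_nonneg_left h2 (by positivity : (0:ℝ) ≤ γ/(2*θ))
      have e2 : γ/(2*θ) * ((1 - θ) * ((1/(n:ℝ)) * ∑ i, ‖g i t - gradient (f i) (x t)‖^2)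
            + β * Lt^2 * γ^2 * ‖(1/(n:ℝ)) • ∑ i, g i t‖^2)
          = γ/(2*θ) * ((1/(n:ℝ)) * ∑ i, ‖g i t - gradient (f i) (x t)‖^2)
            - γ/2 * ((1/(n:ℝ)) * ∑ i, ‖g i t - gradient (f i) (x t)‖^2)
            + (γ/2 * (γ^2*(β/θ)*Lt^2)) * ‖(1/(n:ℝ)) • ∑ i, g i t‖^2 := by
        field_simp
      rw [e2] at h3
      have h5 : γ/2 * (γ^2*(β/θ)*Lt^2) ≤ γ/2 - Lf*γ^2/2 := by
        have := mul_le_mul_of_nonneg_left hbrk (by positivity : (0:ℝ) ≤ γ/2)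
        nlinarith
      have h6 : (γ/2 * (γ^2*(β/θ)*Lt^2)) * ‖(1/(n:ℝ)) • ∑ i, g i t‖^2
          ≤ (γ/2 - Lf*γ^2/2) * ‖(1/(n:ℝ)) • ∑ i, g i t‖^2 :=
        mul_le_mul_of_nonneg_right h5 (sq_nonneg _)
      linarith
    -- telescoping
    have hGnn : ∀ t, (0:ℝ) ≤ (1/(n:ℝ)) * ∑ i, ‖g i t - gradient (f i) (x t)‖^2 := by
      intro t
      positivity
    have htel : ∀ S : ℕ, ∑ t ∈ Finset.range S, (γ/2 * ‖gradient F (x t)‖^2)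
        + (F (x S) - finf + γ/(2*θ) * ((1/(n:ℝ)) * ∑ i, ‖g i S - gradient (f i) (x S)‖^2))
        ≤ F (x 0) - finf + γ/(2*θ) * ((1/(n:ℝ)) * ∑ i, ‖g i 0 - gradient (f i) (x 0)‖^2) := by
      intro S
      induction S with
      | zero => simp
      | succ S ih =>
        rw [Finset.sum_range_succ]
        linarith [hPstep S]
    have hsum : γ/2 * ∑ t ∈ Finset.range T, ‖gradient F (x t)‖^2
        ≤ F (x 0) - finf + γ/(2*θ) * ((1/(n:ℝ)) * ∑ i, ‖g i 0 - gradient (f i) (x 0)‖^2) := by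
      have h := htel T
      rw [Finset.mul_sum]
      have hPT : (0:ℝ) ≤ F (x T) - finf
          + γ/(2*θ) * ((1/(n:ℝ)) * ∑ i, ‖g i T - gradient (f i) (x T)‖^2) := by
        have := hbelow (x T)
        have h2 : (0:ℝ) ≤ γ/(2*θ) * ((1/(n:ℝ)) * ∑ i, ‖g i T - gradient (f i) (x T)‖^2) :=
          mul_nonneg (div_nonneg hγ0.le (by linarith)) (hGnn T)
        linarith
      linarith
    -- conclude
    have hs2 : ∑ t ∈ Finset.range T, ‖gradient F (x t)‖^2
        ≤ 2/γ * (F (x 0) - finf + γ/(2*θ) * ((1/(n:ℝ)) * ∑ i, ‖g i 0 - gradient (f i) (x 0)‖^2)) := by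
      have h := mul_le_mul_of_nonneg_left hsum (by positivity : (0:ℝ) ≤ 2/γ)
      calc ∑ t ∈ Finset.range T, ‖gradient F (x t)‖^2
          = 2/γ * (γ/2 * ∑ t ∈ Finset.range T, ‖gradient F (x t)‖^2) := by
            field_simp
        _ ≤ _ := h
    have hfin := mul_le_mul_of_nonneg_left hs2 (by positivity : (0:ℝ) ≤ 1/(T:ℝ))
    calc (1 / (T : ℝ)) * ∑ t ∈ Finset.range T, ‖gradient F (x t)‖ ^ 2
        ≤ (1/(T:ℝ)) * (2/γ * (F (x 0) - finf
          + γ/(2*θ) * ((1/(n:ℝ)) * ∑ i, ‖g i 0 - gradient (f i) (x 0)‖^2))) := hfin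
      _ = 2 * (F (x 0) - finf) / (γ * T)
          + ((1 / (n : ℝ)) * ∑ i, ‖g i 0 - gradient (f i) (x 0)‖ ^ 2) / (θ * T) := by
        field_simp
end

section
/- (Restricted equivalence of EF and EF21.) Suppose C : R^d → R^d is deterministic, positively homogeneous (C(γx) = γC(x) for all γ > 0), and additive (C(x+y) = C(x) + C(y)). Then the EF iterates defined by w_i^0 = C(γ∇f_i(x^0)), e_i^0 = 0, x^{t+1} = x^t - (1/n)Σ_i w_i^t, e_i^{t+1} = e_i^t + γ∇f_i(x^t) - w_i^t, w_i^{t+1} = C(e_i^{t+1} + γ∇f_i(x^{t+1})), and the EF21 iterates defined by g_i^0 = C(∇f_i(x^0)), x^{t+1} = x^t - γ(1/n)Σ_i g_i^t, g_i^{t+1} = g_i^t + C(∇f_i(x^{t+1}) - g_i^t), satisfy w_i^t = γ g_i^t for all i and t, and hence produce identical iterate sequences {x^t}. -/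
/-- Restricted equivalence of EF and EF21: if `C` is deterministic, positively homogeneous
and additive, then the EF iterates satisfy `w_i^t = γ g_i^t` and the two methods produce
identical iterate sequences. -/
theorem EF_EF21_equivalence {d n : ℕ} (hn : 0 < n)
    (C : EuclideanSpace ℝ (Fin d) → EuclideanSpace ℝ (Fin d))
    (hhom : ∀ (γ : ℝ), 0 < γ → ∀ x, C (γ • x) = γ • C x)
    (hadd : ∀ x y, C (x + y) = C x + C y)
    (f : Fin n → EuclideanSpace ℝ (Fin d) → ℝ)
    (hdiff : ∀ i, Differentiable ℝ (f i))
    (γ : ℝ) (hγ : 0 < γ)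
    (x y : ℕ → EuclideanSpace ℝ (Fin d))
    (w e : Fin n → ℕ → EuclideanSpace ℝ (Fin d))
    (g : Fin n → ℕ → EuclideanSpace ℝ (Fin d))
    -- EF iterates
    (hw0 : ∀ i, w i 0 = C (γ • gradient (f i) (x 0)))
    (he0 : ∀ i, e i 0 = 0)
    (hx : ∀ t, x (t + 1) = x t - (1 / (n : ℝ)) • ∑ i, w i t)
    (he : ∀ i t, e i (t + 1) = e i t + γ • gradient (f i) (x t) - w i t)
    (hw : ∀ i t, w i (t + 1) = C (e i (t + 1) + γ • gradient (f i) (x (t + 1))))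
    -- EF21 iterates, started from the same point
    (hy0 : y 0 = x 0)
    (hg0 : ∀ i, g i 0 = C (gradient (f i) (y 0)))
    (hy : ∀ t, y (t + 1) = y t - γ • ((1 / (n : ℝ)) • ∑ i, g i t))
    (hg : ∀ i t, g i (t + 1) = g i t + C (gradient (f i) (y (t + 1)) - g i t)) :
    (∀ i t, w i t = γ • g i t) ∧ (∀ t, x t = y t) := by
  -- C of 0
  have hC0 : C 0 = 0 := by
    have h := hadd 0 0
    rw [add_zero] at h
    exact (left_eq_add.mp h)
  have hCneg : ∀ z, C (-z) = -C z := by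
    intro z
    have h := hadd z (-z)
    rw [add_neg_cancel, hC0] at h
    exact (eq_neg_of_add_eq_zero_right h.symm)
  have hCsub : ∀ a b, C (a - b) = C a - C b := by
    intro a b
    rw [sub_eq_add_neg, hadd, hCneg, ← sub_eq_add_neg]
  -- structural invariant
  have hwinv : ∀ i t, w i t = C (e i t + γ • gradient (f i) (x t)) := by
    intro i t
    cases t with
    | zero => rw [hw0, he0, zero_add]
    | succ t => exact hw i t
  have key : ∀ t, (∀ i, w i t = γ • g i t) ∧ x t = y t := by
    intro t
    induction t with
    | zero =>
      refine ⟨fun i => ?_, hy0.symm⟩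
      rw [hw0, hg0, hy0, hhom γ hγ]
    | succ t ih =>
      obtain ⟨ihw, ihx⟩ := ih
      have hsum : ∑ i, w i t = γ • ∑ i, g i t := by
        rw [Finset.smul_sum]
        exact Finset.sum_congr rfl fun i _ => ihw i
      have hxy : x (t + 1) = y (t + 1) := by
        rw [hx, hy, ihx, hsum, smul_comm]
      refine ⟨fun i => ?_, hxy⟩
      have h1 : w i (t + 1)
          = w i t - C (w i t) + C (γ • gradient (f i) (x (t + 1))) := by
        rw [hw, he, hadd, hCsub, ← hwinv i t]
      rw [h1, hg i t, smul_add, ← hhom γ hγ (gradient (f i) (y (t + 1)) - g i t),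
        smul_sub, ← ihw i, hCsub, hhom γ hγ, hxy, hhom γ hγ]
      abel
  exact ⟨fun i t => (key t).1 i, fun t => (key t).2⟩
end

section
/- (Single-node deterministic EF21 descent inequality.) Let f : R^d → R be L-smooth and bounded below by f^inf, let C be a deterministic compressor with ||C(x)-x||² ≤ (1-α)||x||², and run x^{t+1} = x^t - γ g^t, g^{t+1} = g^t + C(∇f(x^{t+1}) - g^t). With θ = 1-√(1-α), β = (1-α)/θ, and γ² β L²/θ + γL ≤ 1, the Lyapunov quantity Φ^t = f(x^t) - f^inf + (γ/(2θ))||g^t - ∇f(x^t)||² satisfies Φ^{t+1} ≤ Φ^t - (γ/2)||∇f(x^t)||² for all t ≥ 0. -/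
open intervalIntegral in
lemma descent_lemma {E : Type*} [NormedAddCommGroup E] [InnerProductSpace ℝ E] [CompleteSpace E]
    (f : E → ℝ) (L : ℝ) (hdiff : Differentiable ℝ f)
    (hlip : ∀ a b, ‖gradient f a - gradient f b‖ ≤ L * ‖a - b‖) (x y : E) :
    f y ≤ f x + inner ℝ (gradient f x) (y - x) + L / 2 * ‖y - x‖ ^ 2 := by
  set v := y - x with hv
  set c : ℝ → E := fun s => x + s • v with hc
  -- gradient is continuous
  have hgc : Continuous (gradient f) := by
    rcases le_or_gt L 0 with hL | hL
    · have : ∀ a b : E, gradient f a = gradient f b := by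
        intro a b
        have h := hlip a b
        have : ‖gradient f a - gradient f b‖ ≤ 0 :=
          h.trans (mul_nonpos_of_nonpos_of_nonneg hL (norm_nonneg _))
        have := le_antisymm this (norm_nonneg _)
        rwa [norm_eq_zero, sub_eq_zero] at this
      exact continuous_of_const this
    · exact (LipschitzWith.of_dist_le_mul (K := L.toNNReal) (fun a b => by
        simpa [dist_eq_norm, Real.coe_toNNReal L hL.le] using hlip a b)).continuous
  have hcc : Continuous c := by continuity
  have hderiv : ∀ s : ℝ, HasDerivAt (fun s => f (c s)) (inner ℝ (gradient f (c s)) v) s := by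
    intro s
    have h1 : HasDerivAt c v s := by
      have h0 := ((hasDerivAt_id s).smul_const v).const_add x
      rw [one_smul] at h0; exact h0
    have h2 : HasFDerivAt f (InnerProductSpace.toDual ℝ E (gradient f (c s))) (c s) :=
      hasGradientAt_iff_hasFDerivAt.mp (hdiff (c s)).hasGradientAt
    have h3 := h2.comp_hasDerivAt s h1
    rw [InnerProductSpace.toDual_apply_apply] at h3; exact h3
  have hcont : Continuous fun s : ℝ => (inner ℝ (gradient f (c s)) v : ℝ) :=
    ((hgc.comp hcc)).inner continuous_const
  have hftc : ∫ s in (0:ℝ)..1, inner ℝ (gradient f (c s)) v = f (c 1) - f (c 0) := by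
    exact integral_eq_sub_of_hasDerivAt (fun s _ => hderiv s)
      (hcont.intervalIntegrable 0 1)
  have hc0 : c 0 = x := by simp [hc]
  have hc1 : c 1 = y := by simp [hc, hv]
  have hmono : ∫ s in (0:ℝ)..1, (inner ℝ (gradient f (c s)) v : ℝ)
      ≤ ∫ s in (0:ℝ)..1, (inner ℝ (gradient f x) v + L * s * ‖v‖ ^ 2) := by
    apply integral_mono_on (by norm_num) (hcont.intervalIntegrable 0 1)
      ((Continuous.intervalIntegrable (by continuity) 0 1))
    intro s hs
    rw [Set.mem_Icc] at hs
    have : (inner ℝ (gradient f (c s)) v : ℝ) - inner ℝ (gradient f x) v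
        = inner ℝ (gradient f (c s) - gradient f x) v := by
      rw [inner_sub_left]
    have hbd : (inner ℝ (gradient f (c s) - gradient f x) v : ℝ) ≤ L * s * ‖v‖ ^ 2 := by
      calc (inner ℝ (gradient f (c s) - gradient f x) v : ℝ)
          ≤ ‖gradient f (c s) - gradient f x‖ * ‖v‖ := real_inner_le_norm _ _
        _ ≤ (L * ‖c s - x‖) * ‖v‖ := by
            gcongr ?_ * ‖v‖
            exact hlip _ _
        _ = L * s * ‖v‖ ^ 2 := by
            have : ‖c s - x‖ = s * ‖v‖ := by
              simp [hc, norm_smul, abs_of_nonneg hs.1]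
            rw [this]; ring
    linarith
  have hint : ∫ s in (0:ℝ)..1, ((inner ℝ (gradient f x) v : ℝ) + L * s * ‖v‖ ^ 2)
      = inner ℝ (gradient f x) v + L / 2 * ‖v‖ ^ 2 := by
    rw [integral_add (intervalIntegrable_const) (Continuous.intervalIntegrable (by continuity) 0 1)]
    have h2 : ∫ s in (0:ℝ)..1, L * s * ‖v‖ ^ 2 = L / 2 * ‖v‖ ^ 2 := by
      have : (fun s : ℝ => L * s * ‖v‖ ^ 2) = fun s : ℝ => (L * ‖v‖ ^ 2) * s :=
        funext fun s => by ring
      rw [this, integral_const_mul, integral_id]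
      norm_num; ring
    rw [h2]
    simp
  rw [hc0, hc1] at hftc
  rw [hint] at hmono
  linarith [hftc ▸ hmono]

lemma key_ineq (r A D : ℝ) (hr0 : 0 ≤ r) :
    (1-r) * (r^2 * (A+D)^2) ≤ (1-r) * ((1-(1-r)) * D^2) + r^2 * A^2 := by
  nlinarith [mul_nonneg hr0 (sq_nonneg (r*A - (1-r)*D))]

set_option maxHeartbeats 1000000 in
/-- Single-node deterministic EF21 Lyapunov descent inequality. -/
theorem EF21_single_node_descent {d : ℕ}
    (f : EuclideanSpace ℝ (Fin d) → ℝ) (L : ℝ)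
    (hdiff : Differentiable ℝ f)
    (hlip : ∀ x y, ‖gradient f x - gradient f y‖ ≤ L * ‖x - y‖)
    (finf : ℝ) (hbelow : ∀ x, finf ≤ f x)
    (C : EuclideanSpace ℝ (Fin d) → EuclideanSpace ℝ (Fin d)) (α : ℝ)
    (hα0 : 0 < α) (hα1 : α < 1)
    (hC : ∀ x, ‖C x - x‖ ^ 2 ≤ (1 - α) * ‖x‖ ^ 2)
    (θ β : ℝ) (hθ : θ = 1 - Real.sqrt (1 - α)) (hβ : β = (1 - α) / θ)
    (γ : ℝ) (hγ0 : 0 < γ) (hγ : γ ^ 2 * β * L ^ 2 / θ + γ * L ≤ 1)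
    (x g : ℕ → EuclideanSpace ℝ (Fin d))
    (hx : ∀ t, x (t + 1) = x t - γ • g t)
    (hg : ∀ t, g (t + 1) = g t + C (gradient f (x (t + 1)) - g t))
    (Φ : ℕ → ℝ)
    (hΦ : ∀ t, Φ t = f (x t) - finf + (γ / (2 * θ)) * ‖g t - gradient f (x t)‖ ^ 2) :
    ∀ t, Φ (t + 1) ≤ Φ t - (γ / 2) * ‖gradient f (x t)‖ ^ 2 := by
  intro t
  have hα' : (0:ℝ) ≤ 1 - α := by linarith
  set r := Real.sqrt (1 - α) with hrdef
  have hr2 : r ^ 2 = 1 - α := Real.sq_sqrt hα'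
  have hr0 : 0 ≤ r := Real.sqrt_nonneg _
  have hr1 : r < 1 := by nlinarith
  have hθ0 : 0 < θ := by rw [hθ]; linarith
  have hβθ : β * θ = 1 - α := by rw [hβ]; field_simp
  have hβ0 : 0 ≤ β := by rw [hβ]; positivity
  set X := x t with hX
  set G := g t with hG
  set N := gradient f X with hN
  set N' := gradient f (x (t+1)) with hN'
  set D := ‖G - N‖ with hD
  set A := L * (γ * ‖G‖) with hA
  have hstep : x (t+1) - X = -(γ • G) := by rw [hx t]; abel
  -- Step A: smoothness descent
  have hA1 := descent_lemma f L hdiff hlip X (x (t+1))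
  rw [hstep] at hA1
  have hnrm : ‖-(γ • G)‖ = γ * ‖G‖ := by
    rw [norm_neg, norm_smul, Real.norm_eq_abs, abs_of_pos hγ0]
  have hin : (inner ℝ N (-(γ • G)) : ℝ) = -(γ * inner ℝ N G) := by
    rw [inner_neg_right, real_inner_smul_right]
  rw [hnrm, hin] at hA1
  have hA' : f (x (t+1)) ≤ f X - γ * inner ℝ N G + L * γ^2 / 2 * ‖G‖^2 := by
    calc f (x (t+1)) ≤ f X + -(γ * inner ℝ N G) + L / 2 * (γ * ‖G‖)^2 := hA1
      _ = f X - γ * inner ℝ N G + L * γ^2 / 2 * ‖G‖^2 := by ring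
  have hinner : (inner ℝ N G : ℝ) = (‖N‖^2 + ‖G‖^2 - D^2)/2 := by
    have h1 : ‖G - N‖^2 = ‖G‖^2 - 2 * inner ℝ G N + ‖N‖^2 := norm_sub_sq_real G N
    have h2 : (inner ℝ G N : ℝ) = inner ℝ N G := real_inner_comm N G
    rw [hD]; linarith
  -- Step B: compressor contraction
  have hB : ‖g (t+1) - N'‖^2 ≤ (1-α) * ‖N' - G‖^2 := by
    have key : g (t+1) - N' = C (N' - G) - (N' - G) := by
      rw [hg t, ← hN', ← hG]; abel
    rw [key]; exact hC _
  -- Step C: triangle + gradient lipschitz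
  have hgrad : ‖N' - N‖ ≤ A := by
    have h := hlip (x (t+1)) X
    rw [hstep, hnrm] at h
    rw [hN', hN, hA]; linarith [h]
  have htri : ‖N' - G‖ ≤ A + D := by
    calc ‖N' - G‖ ≤ ‖N' - N‖ + ‖N - G‖ := norm_sub_le_norm_sub_add_norm_sub _ _ _
      _ ≤ A + D := by rw [hD, norm_sub_rev N G]; linarith [hgrad]
  have hsq : ‖N' - G‖^2 ≤ (A + D)^2 := by
    have h0 : (0:ℝ) ≤ ‖N' - G‖ := norm_nonneg _
    nlinarith [htri]
  -- key Young-type inequality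
  have hkey : (1-α) * (A + D)^2 ≤ (1-θ) * D^2 + β * A^2 := by
    have h1 : θ * ((1-α) * (A + D)^2) ≤ θ * ((1-θ) * D^2) + (β * θ) * A^2 := by
      rw [hβθ, ← hr2, hθ]
      exact key_ineq r A D hr0
    have h2 : θ * ((1-α) * (A + D)^2) ≤ θ * ((1-θ) * D^2 + β * A^2) := by linarith [h1]
    exact le_of_mul_le_mul_left h2 hθ0
  have hBfinal : ‖g (t+1) - N'‖^2 ≤ (1-θ) * D^2 + β * A^2 := by
    calc ‖g (t+1) - N'‖^2 ≤ (1-α) * ‖N' - G‖^2 := hB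
      _ ≤ (1-α) * (A + D)^2 := mul_le_mul_of_nonneg_left hsq hα'
      _ ≤ (1-θ) * D^2 + β * A^2 := hkey
  -- combine
  rw [hΦ t, hΦ (t+1), ← hN', ← hN, ← hX, ← hG, ← hD]
  set c := γ / (2 * θ) with hc
  have hc0 : 0 ≤ c := by positivity
  have hcθ : c * θ = γ / 2 := by rw [hc]; field_simp
  have hcoef : c * (β * A^2) + L * γ^2 / 2 * ‖G‖^2 ≤ γ/2 * ‖G‖^2 := by
    have e : c * (β * A^2) + L * γ^2 / 2 * ‖G‖^2
        = (γ/2 * ‖G‖^2) * (γ^2 * β * L^2 / θ + γ * L) := by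
      rw [hc, hA]; field_simp
    rw [e]
    have hg2 : (0:ℝ) ≤ γ/2 * ‖G‖^2 := by positivity
    nlinarith [mul_le_mul_of_nonneg_left hγ hg2]
  have hBc : c * ‖g (t+1) - N'‖^2 ≤ c * ((1-θ) * D^2 + β * A^2) :=
    mul_le_mul_of_nonneg_left hBfinal hc0
  have hcQ : c * ((1-θ) * D^2) = c * D^2 - (γ/2) * D^2 := by
    have : c * ((1-θ) * D^2) = c * D^2 - (c * θ) * D^2 := by ring
    rw [this, hcθ]
  have hinnerγ : γ * (inner ℝ N G : ℝ) = γ/2*‖N‖^2 + γ/2*‖G‖^2 - γ/2*D^2 := by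
    rw [hinner]; ring
  linarith [hA', hinnerγ, hBc, hcoef, hcQ]
end
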